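/- Assume that PH has full column rank (equivalently, H†PH is positive definite) and that there exists x̄ ∈ ℂ^M with |x̄_m| = 1 for all m = 1,…,M and P(Hx̄ + c) = 0 (the noiseless case ΔH = 0). Let x* ∈ ℂ^{M+1} be the vector with x*_{1:M} = −(H†PH)⁻¹H†Pc and x*_{M+1} = 1. Then x*_{1:M} = x̄ (so |x*_m| = 1 for all m), and X* = x*(x*)† is the unique minimizer of the SDP: X* is Hermitian positive semidefinite of rank one with all diagonal entries equal to 1, and for every Hermitian positive semidefinite X' ∈ ℂ^{(M+1)×(M+1)} with all diagonal entries equal to 1 and X' ≠ X*, one has Re Tr(C·X') > Re Tr(C·X*). In particular the phases of x*₁/x*_{M+1},…,x*_M/x*_{M+1} exactly recover the true azimuth biases encoded in x̄. -/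

import Mathlib

open Matrix
open scoped ComplexOrder

/-- `P = I_{K−1} − ‖t‖⁻² t tᵀ`, regarded as a complex `(K−1)×(K−1)` matrix; it is the
orthogonal projection onto the orthogonal complement of the time-difference vector `t`. -/
noncomputable def Pmat {K : ℕ} (t : Fin (K - 1) → ℝ) :
    Matrix (Fin (K - 1)) (Fin (K - 1)) ℂ :=
  1 - Matrix.of fun i j => (((∑ k, t k ^ 2)⁻¹ * (t i * t j) : ℝ) : ℂ)

/-- The Hermitian block matrix `C = [[H†PH, H†Pc],[c†PH, 0]] ∈ ℂ^{(M+1)×(M+1)}`, indexed by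
`Fin M ⊕ Fin 1` (the last index playing the role of the homogenization coordinate). -/
noncomputable def Cmat {K M : ℕ} (H : Matrix (Fin (K - 1)) (Fin M) ℂ)
    (c : Fin (K - 1) → ℂ) (t : Fin (K - 1) → ℝ) :
    Matrix (Fin M ⊕ Fin 1) (Fin M ⊕ Fin 1) ℂ :=
  Matrix.fromBlocks (Hᴴ * Pmat t * H)
    (Matrix.of fun i _ => (Hᴴ *ᵥ (Pmat t *ᵥ c)) i)
    (Matrix.of fun _ j => ((star c) ᵥ* (Pmat t * H)) j) 0

namespace SdpAux

variable {K M : ℕ}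

lemma sum_sq_pos {t : Fin (K - 1) → ℝ} (ht : t ≠ 0) : 0 < ∑ k, t k ^ 2 := by
  have : ∃ k, t k ≠ 0 := by
    by_contra h
    push_neg at h
    exact ht (funext h)
  obtain ⟨k, hk⟩ := this
  exact Finset.sum_pos' (fun i _ => sq_nonneg _) ⟨k, Finset.mem_univ _, by positivity⟩

lemma Pmat_conjTranspose (t : Fin (K - 1) → ℝ) : (Pmat t)ᴴ = Pmat t := by
  unfold Pmat
  rw [conjTranspose_sub, conjTranspose_one]
  congr 1
  ext i j
  simp only [conjTranspose_apply, of_apply, RCLike.star_def, Complex.conj_ofReal]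
  norm_cast
  ring

lemma Pmat_mul_self {t : Fin (K - 1) → ℝ} (ht : t ≠ 0) : Pmat t * Pmat t = Pmat t := by
  have hs : ((∑ k, t k ^ 2)⁻¹ * ∑ k, t k ^ 2) = 1 := inv_mul_cancel₀ (sum_sq_pos ht).ne'
  have hQ : (Matrix.of fun i j => (((∑ k, t k ^ 2)⁻¹ * (t i * t j) : ℝ) : ℂ)) *
      (Matrix.of fun i j => (((∑ k, t k ^ 2)⁻¹ * (t i * t j) : ℝ) : ℂ)) =
      Matrix.of fun i j => (((∑ k, t k ^ 2)⁻¹ * (t i * t j) : ℝ) : ℂ) := by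
    ext i j
    rw [Matrix.mul_apply]
    simp only [of_apply]
    have key : ∑ k, ((∑ l, t l ^ 2)⁻¹ * (t i * t k)) * ((∑ l, t l ^ 2)⁻¹ * (t k * t j))
        = (∑ l, t l ^ 2)⁻¹ * (t i * t j) := by
      have hterm : ∀ k, ((∑ l, t l ^ 2)⁻¹ * (t i * t k)) * ((∑ l, t l ^ 2)⁻¹ * (t k * t j))
          = ((∑ l, t l ^ 2)⁻¹ * (t i * t j)) * ((∑ l, t l ^ 2)⁻¹ * t k ^ 2) := fun k => by
        ring
      rw [Finset.sum_congr rfl fun k _ => hterm k, ← Finset.mul_sum, ← Finset.mul_sum, hs,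
        mul_one]
    rw [← key]
    norm_cast
  unfold Pmat
  rw [sub_mul, one_mul, mul_sub, mul_one, hQ]
  abel

lemma Pmat_posSemidef {t : Fin (K - 1) → ℝ} (ht : t ≠ 0) : (Pmat t).PosSemidef := by
  have h := Matrix.posSemidef_conjTranspose_mul_self (Pmat t)
  rwa [Pmat_conjTranspose, Pmat_mul_self ht] at h

/-- The augmented matrix `A = [H | c]`. -/
noncomputable def Amat (H : Matrix (Fin (K - 1)) (Fin M) ℂ) (c : Fin (K - 1) → ℂ) :
    Matrix (Fin (K - 1)) (Fin M ⊕ Fin 1) ℂ :=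
  Matrix.fromCols H (Matrix.replicateCol (Fin 1) c)

lemma Amat_mulVec (H : Matrix (Fin (K - 1)) (Fin M) ℂ) (c : Fin (K - 1) → ℂ)
    (u : Fin M ⊕ Fin 1 → ℂ) :
    Amat H c *ᵥ u = H *ᵥ (u ∘ Sum.inl) + u (Sum.inr 0) • c := by
  ext k
  simp [Amat, Matrix.fromCols, Matrix.replicateCol, mulVec, dotProduct, Fintype.sum_sum_type,
    mul_comm]

lemma Cmat_eq (H : Matrix (Fin (K - 1)) (Fin M) ℂ) (c : Fin (K - 1) → ℂ)
    (t : Fin (K - 1) → ℝ) :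
    Cmat H c t = (Amat H c)ᴴ * Pmat t * Amat H c -
      Matrix.fromBlocks 0 0 0 (Matrix.of fun _ _ => (star c) ⬝ᵥ (Pmat t *ᵥ c)) := by
  rw [Amat, conjTranspose_fromCols_eq_fromRows_conjTranspose, conjTranspose_replicateCol,
    Matrix.fromRows_mul, Matrix.fromRows_mul_fromCols]
  have hB : Hᴴ * Pmat t * Matrix.replicateCol (Fin 1) c
      = Matrix.replicateCol (Fin 1) (Hᴴ *ᵥ (Pmat t *ᵥ c)) := by
    rw [Matrix.replicateCol_mulVec, Matrix.replicateCol_mulVec, Matrix.mul_assoc]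
  have hC : Matrix.replicateRow (Fin 1) (star c) * Pmat t * H
      = Matrix.replicateRow (Fin 1) ((star c) ᵥ* (Pmat t * H)) := by
    rw [Matrix.replicateRow_vecMul, Matrix.mul_assoc]
  have hD : Matrix.replicateRow (Fin 1) (star c) * Pmat t * Matrix.replicateCol (Fin 1) c
      = Matrix.of fun _ _ => (star c) ⬝ᵥ (Pmat t *ᵥ c) := by
    rw [Matrix.mul_assoc, ← Matrix.replicateCol_mulVec, Matrix.replicateRow_mul_replicateCol]
  rw [hB, hC, hD, Cmat]
  ext i j
  rcases i with m | u <;> rcases j with m' | u' <;>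
    simp [Matrix.fromBlocks, Matrix.replicateCol, Matrix.replicateRow]

lemma re_trace_conjTranspose_mul_self_nonneg {m n : Type*} [Fintype m] [Fintype n]
    (A : Matrix m n ℂ) : 0 ≤ (Matrix.trace (Aᴴ * A)).re := by
  have h : (Matrix.trace (Aᴴ * A)).re = ∑ j, ∑ k, Complex.normSq (A k j) := by
    simp [Matrix.trace, Matrix.diag, Matrix.mul_apply, Complex.re_sum, mul_comm,
      ← Complex.normSq_eq_norm_sq, Complex.mul_conj]
  rw [h]
  exact Finset.sum_nonneg fun j _ => Finset.sum_nonneg fun k _ => Complex.normSq_nonneg _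

lemma eq_zero_of_re_trace_conjTranspose_mul_self {m n : Type*} [Fintype m] [Fintype n]
    {A : Matrix m n ℂ} (h : (Matrix.trace (Aᴴ * A)).re = 0) : A = 0 := by
  have h' : (Matrix.trace (Aᴴ * A)).re = ∑ j, ∑ k, Complex.normSq (A k j) := by
    simp [Matrix.trace, Matrix.diag, Matrix.mul_apply, Complex.re_sum, mul_comm,
      ← Complex.normSq_eq_norm_sq, Complex.mul_conj]
  rw [h'] at h
  have h2 := (Finset.sum_eq_zero_iff_of_nonneg (fun j _ =>
    Finset.sum_nonneg fun k _ => Complex.normSq_nonneg _)).1 h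
  ext k j
  have h3 := (Finset.sum_eq_zero_iff_of_nonneg
    (fun k _ => Complex.normSq_nonneg (A k j))).1 (h2 j (Finset.mem_univ _)) k
    (Finset.mem_univ _)
  simpa [Complex.normSq_eq_zero] using h3

open scoped MatrixOrder in
lemma key_trace {m n : Type*} [Fintype m] [Fintype n] [DecidableEq n]
    (D : Matrix m n ℂ) {X : Matrix n n ℂ} (hX : X.PosSemidef) :
    0 ≤ (Matrix.trace (Dᴴ * D * X)).re ∧
      ((Matrix.trace (Dᴴ * D * X)).re = 0 → D * X = 0) := by
  set S := CFC.sqrt X with hSdef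
  have hS : S * S = X := CFC.sqrt_mul_sqrt_self X hX.nonneg
  have hSh : Sᴴ = S := (CFC.sqrt_nonneg X).posSemidef.1
  have htr : Matrix.trace (Dᴴ * D * X) = Matrix.trace ((D * S)ᴴ * (D * S)) := by
    rw [← hS]
    calc Matrix.trace (Dᴴ * D * (S * S)) = Matrix.trace ((Dᴴ * D * S) * S) := by
          rw [Matrix.mul_assoc (Dᴴ * D)]
      _ = Matrix.trace (S * (Dᴴ * D * S)) := Matrix.trace_mul_comm _ _
      _ = Matrix.trace ((D * S)ᴴ * (D * S)) := by
          rw [conjTranspose_mul, hSh]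
          simp only [Matrix.mul_assoc]
  constructor
  · rw [htr]; exact re_trace_conjTranspose_mul_self_nonneg _
  · intro h0
    rw [htr] at h0
    have hDS : D * S = 0 := eq_zero_of_re_trace_conjTranspose_mul_self h0
    calc D * X = D * (S * S) := by rw [hS]
      _ = (D * S) * S := by rw [Matrix.mul_assoc]
      _ = 0 := by rw [hDS, Matrix.zero_mul]

end SdpAux

open SdpAux in
/-- Corollary 2 (exact recovery in the noiseless case `ΔH = 0`): if `H†PH` is positive
definite (i.e. `PH` has full column rank) and there is a unit-modulus vector `x̄` with
`P(Hx̄ + c) = 0`, then `x* = (−(H†PH)⁻¹H†Pc, 1)` satisfies `x*_{1:M} = x̄`, and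
`X* = x*(x*)†` is the unique rank-one minimizer of the SDP relaxation; in particular the
phases of `x*` exactly recover the true azimuth biases encoded in `x̄`. -/
theorem sdp_exact_recovery_noiseless
    (M K : ℕ) (hM : 1 ≤ M) (hK : 2 ≤ K)
    (H : Matrix (Fin (K - 1)) (Fin M) ℂ) (c : Fin (K - 1) → ℂ)
    (t : Fin (K - 1) → ℝ) (ht : t ≠ 0)
    (hfull : (Hᴴ * Pmat t * H).PosDef)
    (xbar : Fin M → ℂ) (hxbar : ∀ m, ‖xbar m‖ = 1)
    (hnoiseless : Pmat t *ᵥ (H *ᵥ xbar + c) = 0) :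
    let xstar : Fin M ⊕ Fin 1 → ℂ :=
      Sum.elim (-((Hᴴ * Pmat t * H)⁻¹ *ᵥ (Hᴴ *ᵥ (Pmat t *ᵥ c)))) fun _ => 1
    let Xstar : Matrix (Fin M ⊕ Fin 1) (Fin M ⊕ Fin 1) ℂ :=
      Matrix.vecMulVec xstar (star xstar)
    (∀ m, xstar (Sum.inl m) = xbar m) ∧
    Xstar.PosSemidef ∧ Xstar.rank = 1 ∧ (∀ i, Xstar i i = 1) ∧
    ∀ X' : Matrix (Fin M ⊕ Fin 1) (Fin M ⊕ Fin 1) ℂ, X'.PosSemidef → (∀ i, X' i i = 1) →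
      X' ≠ Xstar → (Cmat H c t * Xstar).trace.re < (Cmat H c t * X').trace.re := by
  intro xstar Xstar
  have xstar_def : xstar =
      Sum.elim (-((Hᴴ * Pmat t * H)⁻¹ *ᵥ (Hᴴ *ᵥ (Pmat t *ᵥ c)))) fun _ => 1 := rfl
  have Xstar_def : Xstar = Matrix.vecMulVec xstar (star xstar) := rfl
  have hdet : IsUnit (Hᴴ * Pmat t * H).det := hfull.det_pos.ne'.isUnit
  -- `P c = -(P H x̄)`
  have hPc : Pmat t *ᵥ c = -(Pmat t *ᵥ (H *ᵥ xbar)) := by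
    have h := hnoiseless
    rw [Matrix.mulVec_add] at h
    exact eq_neg_of_add_eq_zero_right h
  have hkey : Hᴴ *ᵥ (Pmat t *ᵥ c) = -((Hᴴ * Pmat t * H) *ᵥ xbar) := by
    rw [hPc, Matrix.mulVec_neg]
    congr 1
    rw [Matrix.mulVec_mulVec, Matrix.mulVec_mulVec]
  have hinv : (Hᴴ * Pmat t * H)⁻¹ *ᵥ (Hᴴ *ᵥ (Pmat t *ᵥ c)) = -xbar := by
    rw [hkey, Matrix.mulVec_neg, Matrix.mulVec_mulVec, Matrix.nonsing_inv_mul _ hdet,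
      Matrix.one_mulVec]
  have comp1 : ∀ m, xstar (Sum.inl m) = xbar m := by
    intro m
    rw [xstar_def]
    simp only [Sum.elim_inl]
    rw [hinv]
    simp
  have hXfact : Xstar = Matrix.replicateCol (Fin 1) xstar * (Matrix.replicateCol (Fin 1) xstar)ᴴ := by
    rw [Xstar_def, Matrix.vecMulVec_eq (Fin 1), Matrix.conjTranspose_replicateCol]
    rfl
  have comp2 : Xstar.PosSemidef := by
    rw [hXfact]; exact Matrix.posSemidef_self_mul_conjTranspose _
  have comp4 : ∀ i, Xstar i i = 1 := by
    intro i
    rw [Xstar_def, Matrix.vecMulVec_apply]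
    rcases i with m | u
    · have : xstar (Sum.inl m) * star (xstar (Sum.inl m)) = 1 := by
        rw [comp1 m, RCLike.star_def, Complex.mul_conj, Complex.normSq_eq_norm_sq, hxbar m]
        norm_num
      simpa using this
    · simp [xstar_def]
  have comp3 : Xstar.rank = 1 := by
    have hle : Xstar.rank ≤ 1 := by
      rw [hXfact]
      exact (Matrix.rank_mul_le_left _ _).trans
        ((Matrix.rank_le_card_width _).trans (by simp))
    have hne : Xstar.rank ≠ 0 := by
      intro h0
      unfold Matrix.rank at h0
      rw [Submodule.finrank_eq_zero, LinearMap.range_eq_bot] at h0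
      have h1 : Xstar *ᵥ Pi.single (Sum.inr 0) 1 = 0 := by
        rw [← Matrix.mulVecLin_apply, h0]
        simp
      have h2 := congrFun h1 (Sum.inr 0)
      simp [Matrix.mulVec_single, comp4] at h2
    omega
  refine ⟨comp1, comp2, comp3, comp4, ?_⟩
  intro X' hX' hdiag' hne'
  have hCsplit : ∀ Y : Matrix (Fin M ⊕ Fin 1) (Fin M ⊕ Fin 1) ℂ,
      (Cmat H c t * Y).trace
        = ((Amat H c)ᴴ * Pmat t * Amat H c * Y).trace
          - ((star c) ⬝ᵥ (Pmat t *ᵥ c)) * Y (Sum.inr 0) (Sum.inr 0) := by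
    intro Y
    rw [Cmat_eq, Matrix.sub_mul, Matrix.trace_sub]
    congr 1
    simp [Matrix.trace, Matrix.diag, Matrix.mul_apply, Fintype.sum_sum_type,
      Matrix.fromBlocks]
  have hAx : Amat H c *ᵥ xstar = H *ᵥ xbar + c := by
    rw [Amat_mulVec]
    have h1 : xstar ∘ Sum.inl = xbar := funext comp1
    have h2 : xstar (Sum.inr 0) = 1 := rfl
    rw [h1, h2, one_smul]
  have hBXstar : (Amat H c)ᴴ * Pmat t * Amat H c * Xstar = 0 := by
    have hBx : ((Amat H c)ᴴ * Pmat t * Amat H c) *ᵥ xstar = 0 := by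
      rw [← Matrix.mulVec_mulVec, ← Matrix.mulVec_mulVec, hAx, hnoiseless,
        Matrix.mulVec_zero]
    rw [hXfact, ← Matrix.mul_assoc, ← Matrix.replicateCol_mulVec, hBx]
    have hcz : Matrix.replicateCol (Fin 1) (0 : Fin M ⊕ Fin 1 → ℂ) = 0 := by
      ext i j; simp [Matrix.replicateCol]
    rw [hcz, Matrix.zero_mul]
  have hBD : (Amat H c)ᴴ * Pmat t * Amat H c
      = (Pmat t * Amat H c)ᴴ * (Pmat t * Amat H c) := by
    rw [conjTranspose_mul, Pmat_conjTranspose]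
    simp only [Matrix.mul_assoc]
    rw [← Matrix.mul_assoc (Pmat t) (Pmat t), Pmat_mul_self ht]
  have hmain : 0 < ((Amat H c)ᴴ * Pmat t * Amat H c * X').trace.re := by
    obtain ⟨hnn, himp⟩ := key_trace (Pmat t * Amat H c) hX'
    rw [hBD]
    rcases lt_or_eq_of_le hnn with hlt | heq
    · exact hlt
    · exfalso
      have hDX : (Pmat t * Amat H c) * X' = 0 := himp heq.symm
      have hcol : ∀ j m, X' (Sum.inl m) j = X' (Sum.inr 0) j * xbar m := by
        intro j
        set u : Fin M ⊕ Fin 1 → ℂ := fun k => X' k j with hu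
        have hu0 : (Pmat t * Amat H c) *ᵥ u = 0 := by
          ext i
          have h := congrFun (congrFun hDX i) j
          simpa [Matrix.mul_apply, Matrix.mulVec, dotProduct, hu] using h
        have hu1 : Pmat t *ᵥ (Amat H c *ᵥ u) = 0 := by
          rw [Matrix.mulVec_mulVec]; exact hu0
        have hw : Pmat t *ᵥ (H *ᵥ (u ∘ Sum.inl - u (Sum.inr 0) • xbar)) = 0 := by
          have hHv : H *ᵥ (u ∘ Sum.inl - u (Sum.inr 0) • xbar)
              = Amat H c *ᵥ u - u (Sum.inr 0) • (H *ᵥ xbar + c) := by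
            rw [Amat_mulVec, Matrix.mulVec_sub, Matrix.mulVec_smul, smul_add]
            abel
          rw [hHv, Matrix.mulVec_sub, Matrix.mulVec_smul, hu1, hnoiseless, smul_zero,
            sub_zero]
        have hw2 : (Hᴴ * Pmat t * H) *ᵥ (u ∘ Sum.inl - u (Sum.inr 0) • xbar) = 0 := by
          rw [← Matrix.mulVec_mulVec, ← Matrix.mulVec_mulVec, hw, Matrix.mulVec_zero]
        have hinj : Function.Injective ((Hᴴ * Pmat t * H).mulVec) :=
          Matrix.mulVec_injective_iff_isUnit.mpr hfull.isUnit
        have hwz : u ∘ Sum.inl - u (Sum.inr 0) • xbar = 0 := by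
          apply hinj
          rw [hw2, Matrix.mulVec_zero]
        intro m
        have h := congrFun hwz m
        simp only [Pi.sub_apply, Function.comp_apply, Pi.smul_apply, smul_eq_mul,
          Pi.zero_apply, sub_eq_zero] at h
        exact h
      apply hne'
      have hrow : ∀ j, X' (Sum.inr 0) j = star (xstar j) := by
        intro j
        rcases j with m | u
        · rw [← hX'.1.apply (Sum.inr 0) (Sum.inl m), hcol (Sum.inr 0) m,
            hdiag' (Sum.inr 0), one_mul, comp1 m]
        · have hu0 : u = 0 := Subsingleton.elim u 0
          subst hu0
          rw [hdiag' (Sum.inr 0)]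
          simp [xstar_def]
      ext i j
      rw [Xstar_def, Matrix.vecMulVec_apply, Pi.star_apply]
      rcases i with m | u
      · rw [hcol j m, hrow j, comp1 m]
        ring
      · have hu0 : u = 0 := Subsingleton.elim u 0
        subst hu0
        rw [hrow j]
        have : xstar (Sum.inr 0) = 1 := rfl
        rw [this, one_mul]
  rw [hCsplit, hCsplit, hBXstar, Matrix.trace_zero, comp4 (Sum.inr 0), hdiag' (Sum.inr 0),
    mul_one]
  simp only [Complex.sub_re, Complex.zero_re]
  linarith
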